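/- Let K be a measurable space and F a separable real normed vector space, and let f ↦ ν_f and f ↦ ν̃_f be two energy-measure assignments on (F, K) (with the defining inequality (b) holding for possibly different equivalent norms on F). Suppose there exist constants 0 < c₁ ≤ c₂ such that c₁·ν_f(B) ≤ ν̃_f(B) ≤ c₂·ν_f(B) for every f ∈ F and every measurable set B. Let ν be a minimal energy-dominant measure for f ↦ ν_f. Then ν is also a minimal energy-dominant measure for f ↦ ν̃_f, and for every N ∈ ℕ and all f₁, …, f_N ∈ F, rank ((dν_{f_i,f_j}/dν)(x))_{i,j≤N} = rank ((dν̃_{f_i,f_j}/dν)(x))_{i,j≤N} for ν-a.e. x ∈ K; consequently the pointwise indices of the two assignments coincide ν-a.e. -/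

import Mathlib

open MeasureTheory

/-- The mutual measure value `ν_{f,g}(B) := (ν_{f+g}(B) − ν_f(B) − ν_g(B))/2`. -/
noncomputable def mutualEM {F K : Type*} [MeasurableSpace K] [Add F]
    (em : F → Measure K) (f g : F) (B : Set K) : ℝ :=
  ((em (f + g) B).toReal - (em f B).toReal - (em g B).toReal) / 2

/-- An energy-measure assignment on `(F, K)` with respect to a given norm function `nrm`:
each `f : F` is assigned a finite measure `ν_f` on `K` such that (a) for every measurable `B`,
`(f, g) ↦ ν_{f,g}(B)` is a (symmetric) bilinear form, and (b)
`(√(ν_f B) − √(ν_g B))² ≤ ν_{f−g}(B) ≤ 2 (nrm (f−g))²` for all measurable `B`. -/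
structure EMA (F K : Type*) [MeasurableSpace K] [AddCommGroup F] [Module ℝ F]
    (nrm : F → ℝ) where
  em : F → Measure K
  finite : ∀ f, IsFiniteMeasure (em f)
  add_left : ∀ (f₁ f₂ g : F) (B : Set K), MeasurableSet B →
    mutualEM em (f₁ + f₂) g B = mutualEM em f₁ g B + mutualEM em f₂ g B
  smul_left : ∀ (c : ℝ) (f g : F) (B : Set K), MeasurableSet B →
    mutualEM em (c • f) g B = c * mutualEM em f g B
  sqrt_diff_le : ∀ (f g : F) (B : Set K), MeasurableSet B →
    (Real.sqrt (em f B).toReal - Real.sqrt (em g B).toReal) ^ 2 ≤ (em (f - g) B).toReal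
  le_norm : ∀ (f g : F) (B : Set K), MeasurableSet B →
    (em (f - g) B).toReal ≤ 2 * nrm (f - g) ^ 2

/-- `ν` is a minimal energy-dominant measure for the assignment `E`. -/
def IsMinED {F K : Type*} [MeasurableSpace K] [AddCommGroup F] [Module ℝ F]
    {nrm : F → ℝ} (E : EMA F K nrm) (ν : Measure K) : Prop :=
  SigmaFinite ν ∧ (∀ f, E.em f ≪ ν) ∧
    ∀ ν' : Measure K, SigmaFinite ν' → (∀ f, E.em f ≪ ν') → ν ≪ ν'

section Aux

open Matrix

variable {F K : Type*} [MeasurableSpace K] [AddCommGroup F] [Module ℝ F] {nrm : F → ℝ}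

lemma mutualEM_comm (em : F → Measure K) (f g : F) (B : Set K) :
    mutualEM em f g B = mutualEM em g f B := by
  unfold mutualEM; rw [add_comm]; ring

lemma mutualEM_zero_left (E : EMA F K nrm) (g : F) (B : Set K) (hB : MeasurableSet B) :
    mutualEM E.em 0 g B = 0 := by
  have h := E.smul_left 0 g g B hB
  rw [zero_smul, zero_mul] at h
  exact h

lemma em_zero_toReal (E : EMA F K nrm) (B : Set K) (hB : MeasurableSet B) :
    (E.em 0 B).toReal = 0 := by
  have h := mutualEM_zero_left E 0 B hB
  unfold mutualEM at h
  rw [add_zero] at h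
  linarith

lemma em_neg_toReal (E : EMA F K nrm) (g : F) (B : Set K) (hB : MeasurableSet B) :
    (E.em (-g) B).toReal = (E.em g B).toReal := by
  have key : ∀ h : F, (E.em h B).toReal ≤ (E.em (-h) B).toReal := by
    intro h
    have h1 := E.sqrt_diff_le 0 h B hB
    rw [zero_sub, em_zero_toReal E B hB, Real.sqrt_zero, zero_sub, neg_sq,
      Real.sq_sqrt ENNReal.toReal_nonneg] at h1
    exact h1
  have h2 := key g
  have h3 := key (-g)
  rw [neg_neg] at h3
  linarith

lemma mutualEM_self (E : EMA F K nrm) (g : F) (B : Set K) (hB : MeasurableSet B) :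
    mutualEM E.em g g B = (E.em g B).toReal := by
  have h1 := E.smul_left (-1) g g B hB
  rw [neg_one_smul, neg_one_mul] at h1
  have h2 : mutualEM E.em (-g) g B =
      ((E.em 0 B).toReal - (E.em (-g) B).toReal - (E.em g B).toReal) / 2 := by
    unfold mutualEM; rw [neg_add_cancel]
  rw [em_zero_toReal E B hB, em_neg_toReal E g B hB] at h2
  rw [h2] at h1
  linarith

lemma mutualEM_sum_left (E : EMA F K nrm) {ι : Type*} (s : Finset ι) (g : ι → F) (h : F)
    (B : Set K) (hB : MeasurableSet B) :
    mutualEM E.em (∑ i ∈ s, g i) h B = ∑ i ∈ s, mutualEM E.em (g i) h B := by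
  classical
  induction s using Finset.induction_on with
  | empty => simpa using mutualEM_zero_left E h B hB
  | insert _ _ hx ih =>
    rw [Finset.sum_insert hx, E.add_left _ _ _ _ hB, ih, Finset.sum_insert hx]

lemma mutualEM_expand (E : EMA F K nrm) {N : ℕ} (c : Fin N → ℝ) (f : Fin N → F)
    (B : Set K) (hB : MeasurableSet B) :
    mutualEM E.em (∑ i, c i • f i) (∑ j, c j • f j) B
      = ∑ i, ∑ j, c i * c j * mutualEM E.em (f i) (f j) B := by
  rw [mutualEM_sum_left E _ _ _ B hB]
  refine Finset.sum_congr rfl fun i _ => ?_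
  rw [E.smul_left _ _ _ _ hB, mutualEM_comm, mutualEM_sum_left E _ _ _ B hB,
    Finset.mul_sum]
  refine Finset.sum_congr rfl fun j _ => ?_
  rw [E.smul_left _ _ _ _ hB, mutualEM_comm]
  ring

lemma quadform_eq {N : ℕ} (A : Matrix (Fin N) (Fin N) ℝ) (v : Fin N → ℝ) :
    v ⬝ᵥ A.mulVec v = ∑ i, ∑ j, v i * v j * A i j := by
  simp only [dotProduct, Matrix.mulVec, Finset.mul_sum]
  exact Finset.sum_congr rfl fun i _ => Finset.sum_congr rfl fun j _ => by ring

lemma rank_eq_rank_of_comparable {N : ℕ} {c₁ c₂ : ℝ} (hc₁ : 0 < c₁)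
    (A A' : Matrix (Fin N) (Fin N) ℝ)
    (hA : A.IsHermitian) (hA' : A'.IsHermitian)
    (hpsd : ∀ v, 0 ≤ v ⬝ᵥ A.mulVec v)
    (hlow : ∀ v, c₁ * (v ⬝ᵥ A.mulVec v) ≤ v ⬝ᵥ A'.mulVec v)
    (hup : ∀ v, v ⬝ᵥ A'.mulVec v ≤ c₂ * (v ⬝ᵥ A.mulVec v)) :
    A.rank = A'.rank := by
  have hpsd' : ∀ v, 0 ≤ v ⬝ᵥ A'.mulVec v := fun v =>
    le_trans (mul_nonneg hc₁.le (hpsd v)) (hlow v)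
  have hApsd : A.PosSemidef := Matrix.PosSemidef.of_dotProduct_mulVec_nonneg hA (fun v => by simpa using hpsd v)
  have hA'psd : A'.PosSemidef := Matrix.PosSemidef.of_dotProduct_mulVec_nonneg hA' (fun v => by simpa using hpsd' v)
  have hker : LinearMap.ker A.mulVecLin = LinearMap.ker A'.mulVecLin := by
    ext v
    simp only [LinearMap.mem_ker, Matrix.mulVecLin_apply]
    constructor
    · intro h
      have h0 : v ⬝ᵥ A.mulVec v = 0 := by rw [h, dotProduct_zero]
      refine (hA'psd.dotProduct_mulVec_zero_iff v).mp ?_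
      have h1 := hup v
      have h2 := hpsd' v
      rw [h0, mul_zero] at h1
      simpa [star_trivial] using le_antisymm h1 h2
    · intro h
      have h0 : v ⬝ᵥ A'.mulVec v = 0 := by rw [h, dotProduct_zero]
      refine (hApsd.dotProduct_mulVec_zero_iff v).mp ?_
      have h1 := hlow v
      have h2 := hpsd v
      rw [h0] at h1
      have h3 : v ⬝ᵥ A.mulVec v = 0 := by nlinarith
      simpa [star_trivial] using h3
  have h1 := LinearMap.finrank_range_add_finrank_ker A.mulVecLin
  have h2 := LinearMap.finrank_range_add_finrank_ker A'.mulVecLin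
  rw [hker] at h1
  unfold Matrix.rank
  omega

lemma setIntegral_quad (E : EMA F K nrm) (ν : Measure K) {N : ℕ} (f : Fin N → F)
    (W : Fin N → Fin N → K → ℝ)
    (hWint : ∀ i j, Integrable (W i j) ν)
    (hW : ∀ (i j : Fin N) (B : Set K), MeasurableSet B →
      mutualEM E.em (f i) (f j) B = ∫ x in B, W i j x ∂ν)
    (c : Fin N → ℝ) (B : Set K) (hB : MeasurableSet B) :
    ∫ x in B, (∑ i, ∑ j, c i * c j * W i j x) ∂ν
      = (E.em (∑ i, c i • f i) B).toReal := by
  rw [integral_finset_sum _ (fun i _ =>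
    integrable_finset_sum _ fun j _ => ((hWint i j).const_mul _).integrableOn)]
  have hstep : ∀ i, ∫ x in B, ∑ j, c i * c j * W i j x ∂ν
      = ∑ j, c i * c j * ∫ x in B, W i j x ∂ν := by
    intro i
    rw [integral_finset_sum _ fun j _ => ((hWint i j).const_mul _).integrableOn]
    exact Finset.sum_congr rfl fun j _ => integral_const_mul _ _
  rw [Finset.sum_congr rfl fun i _ => hstep i,
    ← mutualEM_self E _ B hB, mutualEM_expand E c f B hB]
  exact Finset.sum_congr rfl fun i _ => Finset.sum_congr rfl fun j _ => by
    rw [hW i j B hB]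

/-- The a.e. rank-equality core of the argument. -/
lemma rank_ae {nrm' : F → ℝ} (E : EMA F K nrm) (E' : EMA F K nrm')
    (c₁ c₂ : ℝ) (hc₁ : 0 < c₁)
    (hcomp : ∀ (f : F) (B : Set K), MeasurableSet B →
      c₁ * (E.em f B).toReal ≤ (E'.em f B).toReal ∧
        (E'.em f B).toReal ≤ c₂ * (E.em f B).toReal)
    (ν : Measure K) (N : ℕ) (f : Fin N → F) (W W' : Fin N → Fin N → K → ℝ)
    (hWint : ∀ i j, Integrable (W i j) ν) (hW'int : ∀ i j, Integrable (W' i j) ν)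
    (hW : ∀ (i j : Fin N) (B : Set K), MeasurableSet B →
      mutualEM E.em (f i) (f j) B = ∫ x in B, W i j x ∂ν)
    (hW' : ∀ (i j : Fin N) (B : Set K), MeasurableSet B →
      mutualEM E'.em (f i) (f j) B = ∫ x in B, W' i j x ∂ν) :
    ∀ᵐ x ∂ν, (Matrix.of fun i j : Fin N => W i j x).rank
      = (Matrix.of fun i j : Fin N => W' i j x).rank := by
  classical
  -- symmetry a.e.
  have hsym : ∀ (V : Fin N → Fin N → K → ℝ),
      (∀ i j, Integrable (V i j) ν) →
      (∀ (i j : Fin N) (B : Set K), MeasurableSet B →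
        (∫ x in B, V i j x ∂ν) = ∫ x in B, V j i x ∂ν) →
      ∀ᵐ x ∂ν, ∀ i j, V i j x = V j i x := by
    intro V hVint hVsymm
    rw [ae_all_iff]
    intro i
    rw [ae_all_iff]
    intro j
    have h1 : V i j ≤ᵐ[ν] V j i := ae_le_of_forall_setIntegral_le (hVint i j) (hVint j i)
      (fun s hs _ => le_of_eq (hVsymm i j s hs))
    have h2 : V j i ≤ᵐ[ν] V i j := ae_le_of_forall_setIntegral_le (hVint j i) (hVint i j)
      (fun s hs _ => le_of_eq (hVsymm j i s hs))
    filter_upwards [h1, h2] with x hx1 hx2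
    exact le_antisymm hx1 hx2
  have hsymW : ∀ᵐ x ∂ν, ∀ i j, W i j x = W j i x := by
    refine hsym W hWint fun i j B hB => ?_
    rw [← hW i j B hB, ← hW j i B hB, mutualEM_comm]
  have hsymW' : ∀ᵐ x ∂ν, ∀ i j, W' i j x = W' j i x := by
    refine hsym W' hW'int fun i j B hB => ?_
    rw [← hW' i j B hB, ← hW' j i B hB, mutualEM_comm]
  -- quadratic form inequalities a.e., for rational coefficients
  have hq : ∀ᵐ x ∂ν, ∀ q : Fin N → ℚ,
      0 ≤ (∑ i, ∑ j, (q i : ℝ) * (q j : ℝ) * W i j x) ∧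
      c₁ * (∑ i, ∑ j, (q i : ℝ) * (q j : ℝ) * W i j x)
        ≤ (∑ i, ∑ j, (q i : ℝ) * (q j : ℝ) * W' i j x) ∧
      (∑ i, ∑ j, (q i : ℝ) * (q j : ℝ) * W' i j x)
        ≤ c₂ * (∑ i, ∑ j, (q i : ℝ) * (q j : ℝ) * W i j x) := by
    rw [ae_all_iff]
    intro q
    set c : Fin N → ℝ := fun i => (q i : ℝ) with hc
    have hintw : Integrable (fun x => ∑ i, ∑ j, c i * c j * W i j x) ν :=
      integrable_finset_sum _ fun i _ => integrable_finset_sum _ fun j _ =>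
        (hWint i j).const_mul _
    have hintw' : Integrable (fun x => ∑ i, ∑ j, c i * c j * W' i j x) ν :=
      integrable_finset_sum _ fun i _ => integrable_finset_sum _ fun j _ =>
        (hW'int i j).const_mul _
    have key := setIntegral_quad E ν f W hWint hW c
    have key' := setIntegral_quad E' ν f W' hW'int hW' c
    have h0 : (0 : K → ℝ) ≤ᵐ[ν] (fun x => ∑ i, ∑ j, c i * c j * W i j x) := by
      refine ae_nonneg_of_forall_setIntegral_nonneg hintw fun s hs _ => ?_
      rw [key s hs]; exact ENNReal.toReal_nonneg
    have hlo : (fun x => c₁ * ∑ i, ∑ j, c i * c j * W i j x)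
        ≤ᵐ[ν] (fun x => ∑ i, ∑ j, c i * c j * W' i j x) := by
      refine ae_le_of_forall_setIntegral_le (hintw.const_mul _) hintw' fun s hs _ => ?_
      rw [integral_const_mul, key s hs, key' s hs]
      exact (hcomp _ s hs).1
    have hhi : (fun x => ∑ i, ∑ j, c i * c j * W' i j x)
        ≤ᵐ[ν] (fun x => c₂ * ∑ i, ∑ j, c i * c j * W i j x) := by
      refine ae_le_of_forall_setIntegral_le hintw' (hintw.const_mul _) fun s hs _ => ?_
      rw [integral_const_mul, key s hs, key' s hs]
      exact (hcomp _ s hs).2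
    filter_upwards [h0, hlo, hhi] with x h0x hlox hhix
    exact ⟨h0x, hlox, hhix⟩
  -- combine and conclude pointwise
  filter_upwards [hsymW, hsymW', hq] with x hxW hxW' hxq
  set A : Matrix (Fin N) (Fin N) ℝ := Matrix.of fun i j => W i j x with hA
  set A' : Matrix (Fin N) (Fin N) ℝ := Matrix.of fun i j => W' i j x with hA'
  -- extend inequalities from rational to real vectors by density/continuity
  have hcont : ∀ V : Fin N → Fin N → K → ℝ,
      Continuous (fun v : Fin N → ℝ => ∑ i, ∑ j, v i * v j * V i j x) := fun V =>
    continuous_finset_sum _ fun i _ => continuous_finset_sum _ fun j _ =>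
      ((continuous_apply i).mul (continuous_apply j)).mul continuous_const
  have hreal : ∀ v : Fin N → ℝ,
      0 ≤ (∑ i, ∑ j, v i * v j * W i j x) ∧
      c₁ * (∑ i, ∑ j, v i * v j * W i j x) ≤ (∑ i, ∑ j, v i * v j * W' i j x) ∧
      (∑ i, ∑ j, v i * v j * W' i j x) ≤ c₂ * (∑ i, ∑ j, v i * v j * W i j x) := by
    intro v
    set T : Set (Fin N → ℝ) := {v | 0 ≤ (∑ i, ∑ j, v i * v j * W i j x) ∧
      c₁ * (∑ i, ∑ j, v i * v j * W i j x) ≤ (∑ i, ∑ j, v i * v j * W' i j x) ∧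
      (∑ i, ∑ j, v i * v j * W' i j x) ≤ c₂ * (∑ i, ∑ j, v i * v j * W i j x)} with hT
    have hTclosed : IsClosed T := by
      refine IsClosed.inter (isClosed_le continuous_const (hcont W)) ?_
      exact IsClosed.inter (isClosed_le (continuous_const.mul (hcont W)) (hcont W'))
        (isClosed_le (hcont W') (continuous_const.mul (hcont W)))
    have hsub : Set.pi Set.univ (fun _ : Fin N => Set.range ((↑) : ℚ → ℝ)) ⊆ T := by
      intro u hu
      choose q hqv using fun i => hu i (Set.mem_univ i)
      have huq : u = fun i => (q i : ℝ) := funext fun i => (hqv i).symm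
      rw [hT, Set.mem_setOf_eq, huq]
      exact hxq q
    have hdense : Dense (Set.pi Set.univ (fun _ : Fin N => Set.range ((↑) : ℚ → ℝ))) :=
      dense_pi Set.univ fun i _ => Rat.denseRange_cast
    have : (Set.univ : Set (Fin N → ℝ)) ⊆ T := by
      rw [← hdense.closure_eq]
      exact closure_minimal hsub hTclosed
    exact this (Set.mem_univ v)
  have hAH : A.IsHermitian := by
    ext i j
    simp only [Matrix.conjTranspose_apply, Matrix.of_apply, star_trivial, hA]
    exact hxW j i
  have hA'H : A'.IsHermitian := by
    ext i j
    simp only [Matrix.conjTranspose_apply, Matrix.of_apply, star_trivial, hA']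
    exact hxW' j i
  refine rank_eq_rank_of_comparable (c₂ := c₂) hc₁ A A' hAH hA'H ?_ ?_ ?_
  · intro v; rw [quadform_eq]; exact (hreal v).1
  · intro v; rw [quadform_eq, quadform_eq]; exact (hreal v).2.1
  · intro v; rw [quadform_eq, quadform_eq]; exact (hreal v).2.2

end Aux

/-- Proposition 2.11 of the paper (stability of the pointwise index): if two energy-measure
assignments (with equivalent norms) have comparable energy measures,
`c₁ ν_f ≤ ν̃_f ≤ c₂ ν_f`, then a minimal energy-dominant measure `ν` of the first is also one
for the second, the ranks of the density matrices of any finite family coincide ν-a.e., and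
the pointwise indices coincide ν-a.e. -/
theorem stmt15 {F K : Type*} [MeasurableSpace K] [NormedAddCommGroup F]
    [NormedSpace ℝ F] [TopologicalSpace.SeparableSpace F]
    (E : EMA F K fun f => ‖f‖)
    (nrm' : F → ℝ)
    (hequiv : ∃ cl cu : ℝ, 0 < cl ∧ ∀ f : F, cl * ‖f‖ ≤ nrm' f ∧ nrm' f ≤ cu * ‖f‖)
    (E' : EMA F K nrm')
    (c₁ c₂ : ℝ) (hc₁ : 0 < c₁) (hc₁₂ : c₁ ≤ c₂)
    (hcomp : ∀ (f : F) (B : Set K), MeasurableSet B →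
      c₁ * (E.em f B).toReal ≤ (E'.em f B).toReal ∧
        (E'.em f B).toReal ≤ c₂ * (E.em f B).toReal)
    (ν : Measure K) (hν : IsMinED E ν) :
    IsMinED E' ν ∧
    (∀ (N : ℕ) (f : Fin N → F) (W W' : Fin N → Fin N → K → ℝ),
      (∀ i j, Integrable (W i j) ν) → (∀ i j, Integrable (W' i j) ν) →
      (∀ (i j : Fin N) (B : Set K), MeasurableSet B →
        mutualEM E.em (f i) (f j) B = ∫ x in B, W i j x ∂ν) →
      (∀ (i j : Fin N) (B : Set K), MeasurableSet B →
        mutualEM E'.em (f i) (f j) B = ∫ x in B, W' i j x ∂ν) →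
      ∀ᵐ x ∂ν, (Matrix.of fun i j : Fin N => W i j x).rank
        = (Matrix.of fun i j : Fin N => W' i j x).rank) ∧
    (∀ f : ℕ → F, Dense (Submodule.span ℝ (Set.range f) : Set F) →
      ∀ Z Z' : ℕ → ℕ → K → ℝ,
      (∀ i j, Integrable (Z i j) ν) → (∀ i j, Integrable (Z' i j) ν) →
      (∀ (i j : ℕ) (B : Set K), MeasurableSet B →
        mutualEM E.em (f i) (f j) B = ∫ x in B, Z i j x ∂ν) →
      (∀ (i j : ℕ) (B : Set K), MeasurableSet B →
        mutualEM E'.em (f i) (f j) B = ∫ x in B, Z' i j x ∂ν) →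
      ∀ᵐ x ∂ν, (⨆ M : ℕ, ((Matrix.of fun i j : Fin M => Z i j x).rank : ℕ∞))
        = ⨆ M : ℕ, ((Matrix.of fun i j : Fin M => Z' i j x).rank : ℕ∞)) := by
  obtain ⟨hσ, hdomE, hmin⟩ := hν
  refine ⟨⟨hσ, ?_, ?_⟩, ?_, ?_⟩
  · -- E'.em f ≪ ν
    intro f
    refine Measure.AbsolutelyContinuous.mk fun s hs hνs => ?_
    have h0 : E.em f s = 0 := hdomE f hνs
    have h1 := (hcomp f s hs).2
    rw [h0] at h1
    simp only [Measure.coe_zero, Pi.zero_apply, ENNReal.toReal_zero, mul_zero] at h1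
    have h2 : (E'.em f s).toReal = 0 := le_antisymm h1 ENNReal.toReal_nonneg
    haveI := E'.finite f
    rw [ENNReal.toReal_eq_zero_iff] at h2
    exact h2.resolve_right (measure_ne_top _ _)
  · -- minimality
    intro ν' hσ' hdom'
    refine hmin ν' hσ' fun f => ?_
    refine Measure.AbsolutelyContinuous.mk fun s hs hν's => ?_
    have h0 : E'.em f s = 0 := hdom' f hν's
    have h1 := (hcomp f s hs).1
    rw [h0] at h1
    simp only [Measure.coe_zero, Pi.zero_apply, ENNReal.toReal_zero] at h1
    have h2 : (E.em f s).toReal = 0 := by nlinarith [ENNReal.toReal_nonneg (a := E.em f s)]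
    haveI := E.finite f
    rw [ENNReal.toReal_eq_zero_iff] at h2
    exact h2.resolve_right (measure_ne_top _ _)
  · -- finite family rank equality
    intro N f W W' hWint hW'int hW hW'
    exact rank_ae E E' c₁ c₂ hc₁ hcomp ν N f W W' hWint hW'int hW hW'
  · -- pointwise index equality
    intro f _ Z Z' hZint hZ'int hZ hZ'
    have hM : ∀ M : ℕ, ∀ᵐ x ∂ν,
        (Matrix.of fun i j : Fin M => Z i j x).rank
          = (Matrix.of fun i j : Fin M => Z' i j x).rank := by
      intro M
      exact rank_ae E E' c₁ c₂ hc₁ hcomp ν M (fun i : Fin M => f i)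
        (fun i j : Fin M => Z i j) (fun i j : Fin M => Z' i j)
        (fun i j => hZint i j) (fun i j => hZ'int i j)
        (fun i j B hB => hZ i j B hB) (fun i j B hB => hZ' i j B hB)
    filter_upwards [ae_all_iff.mpr hM] with x hx
    exact iSup_congr fun M => by rw [hx M]
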